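/- Let F be a non-trivial increasing family of subsets of a finite set X, k a positive integer, and suppose H is a q-cheap cover of the k-cloned family F_k. Then there exists a kq-cheap cover of F. Consequently, q_c(F_k) ≤ q_c(F)/k. -/
import Mathlib


open Finset

variable {α : Type*}

/-- Probability that a `p`-random subset of a finite type `α` lies in the family `F`. -/
noncomputable def probMem [Fintype α] [DecidableEq α] (p : ℝ) (F : Finset (Finset α)) : ℝ :=
  ∑ A ∈ F, p ^ A.card * (1 - p) ^ (Fintype.card α - A.card)

/-- `F` is an increasing family (up-set). -/
def IncreasingFam [DecidableEq α] (F : Finset (Finset α)) : Prop :=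
  ∀ A ∈ F, ∀ B : Finset α, A ⊆ B → B ∈ F

/-- `F` is non-trivial: not empty and not all of `P(X)`. -/
def NontrivialFam [Fintype α] [DecidableEq α] (F : Finset (Finset α)) : Prop :=
  F ≠ ∅ ∧ F ≠ Finset.univ

/-- The `q`-cost of a family `G`. -/
noncomputable def cost [DecidableEq α] (q : ℝ) (G : Finset (Finset α)) : ℝ :=
  ∑ S ∈ G, q ^ S.card

/-- `G` covers `F`: every member of `F` contains some member of `G`. -/
def Covers [DecidableEq α] (G F : Finset (Finset α)) : Prop :=
  ∀ A ∈ F, ∃ S ∈ G, S ⊆ A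

/-- The expectation threshold of `F`. -/
noncomputable def qc [Fintype α] [DecidableEq α] (F : Finset (Finset α)) : ℝ :=
  sSup {q : ℝ | q ∈ Set.Icc (0 : ℝ) 1 ∧
    ∃ G : Finset (Finset α), Covers G F ∧ cost q G ≤ 1 / 2}

/-- The `k`-cloned family `F_k ⊂ P(X × [k])`. -/
def clone [Fintype α] [DecidableEq α] (k : ℕ) (F : Finset (Finset α)) :
    Finset (Finset (α × Fin k)) :=
  Finset.univ.filter (fun S => S.image Prod.fst ∈ F)

/-- `Ψ(S)`: minimal preimages of `S` under the projection `π : X × [k] → X`. -/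
def Psi [Fintype α] [DecidableEq α] (k : ℕ) (S : Finset α) :
    Finset (Finset (α × Fin k)) :=
  Finset.univ.filter (fun S' => S'.image Prod.fst = S ∧ S'.card = S.card)

/-- `l(F)`: the size of a largest minimal element of `F`. -/
def ell [Fintype α] [DecidableEq α] (F : Finset (Finset α)) : ℕ :=
  (F.filter (fun A => ∀ B ⊂ A, B ∉ F)).sup Finset.card

-- auxiliary lemmas

lemma sum_image_le' {β γ : Type*} [DecidableEq γ] (s : Finset β) (g : β → γ) (w : γ → ℝ)
    (hw : ∀ t, 0 ≤ w t) : ∑ t ∈ s.image g, w t ≤ ∑ b ∈ s, w (g b) := by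
  rw [Finset.sum_comp w g]
  apply Finset.sum_le_sum
  intro t ht
  have h1 : 1 ≤ (s.filter fun b => g b = t).card := by
    rw [Nat.one_le_iff_ne_zero, Ne, Finset.card_eq_zero]
    rw [Finset.mem_image] at ht
    obtain ⟨b, hb, rfl⟩ := ht
    intro h
    have : b ∈ s.filter fun b' => g b' = g b := Finset.mem_filter.mpr ⟨hb, rfl⟩
    rw [h] at this
    exact absurd this (Finset.notMem_empty _)
  calc w t = 1 * w t := (one_mul _).symm
    _ ≤ (s.filter fun b => g b = t).card * w t := by
        apply mul_le_mul_of_nonneg_right _ (hw t)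
        exact_mod_cast h1
    _ = (s.filter fun b => g b = t).card • w t := (nsmul_eq_mul _ _).symm

lemma main_aux [Fintype α] [DecidableEq α] (F : Finset (Finset α)) (k : ℕ) (hk : 0 < k)
    (q : ℝ) (hq0 : 0 ≤ q) (H : Finset (Finset (α × Fin k))) (hH : Covers H (clone k F))
    (hcheap : cost q H ≤ 1 / 2) :
    ∃ G : Finset (Finset α), Covers G F ∧ cost ((k : ℝ) * q) G ≤ 1 / 2 := by
  classical
  set n := Fintype.card α with hn
  -- graph of f
  let graphOf : (α → Fin k) → Finset (α × Fin k) := fun f => Finset.univ.image fun x => (x, f x)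
  have mem_graph : ∀ (f : α → Fin k) (p : α × Fin k), p ∈ graphOf f ↔ p.2 = f p.1 := by
    intro f p
    simp only [graphOf, Finset.mem_image, Finset.mem_univ, true_and]
    constructor
    · rintro ⟨x, rfl⟩; rfl
    · intro h; exact ⟨p.1, by rw [← h]⟩
  let Gf : (α → Fin k) → Finset (Finset α) := fun f =>
    (H.filter (fun S => S ⊆ graphOf f)).image (fun S => S.image Prod.fst)
  -- Gf f covers F for every f
  have hcov : ∀ f : α → Fin k, Covers (Gf f) F := by
    intro f A hA
    have him : (A.image fun x => (x, f x)).image Prod.fst = A := by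
      rw [Finset.image_image]; ext x; simp
    have hAf : (A.image fun x => (x, f x)) ∈ clone k F := by
      rw [clone, Finset.mem_filter, him]
      exact ⟨Finset.mem_univ _, hA⟩
    obtain ⟨S, hS, hSsub⟩ := hH _ hAf
    refine ⟨S.image Prod.fst, ?_, ?_⟩
    · apply Finset.mem_image_of_mem
      rw [Finset.mem_filter]
      refine ⟨hS, hSsub.trans ?_⟩
      exact Finset.image_subset_image (Finset.subset_univ A)
    · rw [← him]
      exact Finset.image_subset_image hSsub
  -- cost bound per f
  have hcost_f : ∀ f : α → Fin k, cost ((k : ℝ) * q) (Gf f) ≤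
      ∑ S ∈ H.filter (fun S => S ⊆ graphOf f), ((k : ℝ) * q) ^ (S.image Prod.fst).card := by
    intro f
    exact sum_image_le' _ _ (fun T : Finset α => ((k : ℝ) * q) ^ T.card)
      (fun T : Finset α => pow_nonneg (by positivity) _)
  -- summing over all f
  have key : ∀ S ∈ H,
      ((Finset.univ.filter (fun f : α → Fin k => S ⊆ graphOf f)).card : ℝ)
        * ((k : ℝ) * q) ^ (S.image Prod.fst).card ≤ (k : ℝ) ^ n * q ^ S.card := by
    intro S _
    rcases Finset.eq_empty_or_nonempty (Finset.univ.filter (fun f : α → Fin k => S ⊆ graphOf f))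
      with he | ⟨f₀, hf₀⟩
    · rw [he]; simp; positivity
    · have hf₀' : S ⊆ graphOf f₀ := (Finset.mem_filter.mp hf₀).2
      have hinj : Set.InjOn (Prod.fst : α × Fin k → α) ↑S := by
        intro p hp p' hp' hpp
        rw [Finset.mem_coe] at hp hp'
        have h1 := (mem_graph f₀ p).mp (hf₀' hp)
        have h2 := (mem_graph f₀ p').mp (hf₀' hp')
        exact Prod.ext hpp (by rw [h1, h2, hpp])
      have hcardim : (S.image Prod.fst).card = S.card := Finset.card_image_of_injOn hinj
      have hsn : S.card ≤ n := by
        rw [← hcardim, hn]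
        exact Finset.card_le_univ _
      -- bound the number of such f
      have hcount : (Finset.univ.filter (fun f : α → Fin k => S ⊆ graphOf f)).card
          ≤ k ^ (n - S.card) := by
        have : (Finset.univ.filter (fun f : α → Fin k => S ⊆ graphOf f)).card ≤
            (Finset.univ : Finset ({x : α // x ∉ S.image Prod.fst} → Fin k)).card := by
          apply Finset.card_le_card_of_injOn (fun f => fun x => f x.1)
            (fun _ _ => Finset.mem_univ _)
          intro f hf g hg hfg
          rw [Finset.mem_coe, Finset.mem_filter] at hf hg
          funext x
          by_cases hx : x ∈ S.image Prod.fst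
          · rw [Finset.mem_image] at hx
            obtain ⟨p, hp, rfl⟩ := hx
            have h1 := (mem_graph f p).mp (hf.2 hp)
            have h2 := (mem_graph g p).mp (hg.2 hp)
            rw [← h1, ← h2]
          · exact congrFun hfg ⟨x, hx⟩
        rw [Finset.card_univ, Fintype.card_fun, Fintype.card_fin] at this
        convert this using 2
        rw [Fintype.card_subtype]
        have : Finset.univ.filter (fun x => x ∉ S.image Prod.fst) = (S.image Prod.fst)ᶜ := by
          ext x; simp
        rw [this, Finset.card_compl, hcardim, hn]
      calc ((Finset.univ.filter (fun f : α → Fin k => S ⊆ graphOf f)).card : ℝ)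
            * ((k : ℝ) * q) ^ (S.image Prod.fst).card
          ≤ ((k : ℝ)) ^ (n - S.card) * ((k : ℝ) * q) ^ S.card := by
            rw [hcardim]
            apply mul_le_mul_of_nonneg_right _ (by positivity)
            exact_mod_cast hcount
        _ = (k : ℝ) ^ n * q ^ S.card := by
            rw [mul_pow, ← mul_assoc, ← pow_add, Nat.sub_add_cancel hsn]
  -- total
  have htot : ∑ f : α → Fin k, cost ((k : ℝ) * q) (Gf f) ≤ ∑ _f : α → Fin k, (1 / 2 : ℝ) := by
    have h1 : ∑ f : α → Fin k, cost ((k : ℝ) * q) (Gf f) ≤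
        ∑ f : α → Fin k, ∑ S ∈ H.filter (fun S => S ⊆ graphOf f),
          ((k : ℝ) * q) ^ (S.image Prod.fst).card :=
      Finset.sum_le_sum fun f _ => hcost_f f
    have h2 : ∑ f : α → Fin k, ∑ S ∈ H.filter (fun S => S ⊆ graphOf f),
          ((k : ℝ) * q) ^ (S.image Prod.fst).card
        = ∑ S ∈ H, ((Finset.univ.filter (fun f : α → Fin k => S ⊆ graphOf f)).card : ℝ)
            * ((k : ℝ) * q) ^ (S.image Prod.fst).card := by
      simp_rw [Finset.sum_filter]
      rw [Finset.sum_comm]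
      congr 1
      funext S
      rw [← Finset.sum_filter, Finset.sum_const, nsmul_eq_mul]
    have h3 : ∑ S ∈ H, ((Finset.univ.filter (fun f : α → Fin k => S ⊆ graphOf f)).card : ℝ)
            * ((k : ℝ) * q) ^ (S.image Prod.fst).card ≤ (k : ℝ) ^ n * cost q H := by
      rw [cost, Finset.mul_sum]
      exact Finset.sum_le_sum key
    have h4 : ((k : ℝ)) ^ n * cost q H ≤ (k : ℝ) ^ n * (1 / 2) := by
      apply mul_le_mul_of_nonneg_left hcheap (by positivity)
    have h5 : ∑ _f : α → Fin k, (1 / 2 : ℝ) = (k : ℝ) ^ n * (1 / 2) := by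
      rw [Finset.sum_const, Finset.card_univ, Fintype.card_fun, Fintype.card_fin,
        nsmul_eq_mul]
      push_cast
      ring
    rw [h5]
    linarith
  haveI : Nonempty (Fin k) := ⟨⟨0, hk⟩⟩
  haveI : Nonempty (α → Fin k) := ⟨fun _ => Classical.arbitrary _⟩
  obtain ⟨f, _, hf⟩ := Finset.exists_le_of_sum_le Finset.univ_nonempty htot
  exact ⟨Gf f, hcov f, hf⟩

theorem stmt10 [Fintype α] [DecidableEq α] (F : Finset (Finset α))
    (hinc : IncreasingFam F) (hnt : NontrivialFam F) (k : ℕ) (hk : 0 < k)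
    (q : ℝ) (hq : q ∈ Set.Icc (0 : ℝ) 1)
    (H : Finset (Finset (α × Fin k))) (hH : Covers H (clone k F))
    (hcheap : cost q H ≤ 1 / 2) :
    (∃ G : Finset (Finset α), Covers G F ∧ cost ((k : ℝ) * q) G ≤ 1 / 2) ∧
      qc (clone k F) ≤ qc F / k := by
  classical
  constructor
  · exact main_aux F k hk q hq.1 H hH hcheap
  · have hkR : (0 : ℝ) < k := by exact_mod_cast hk
    have hFne : F.Nonempty := Finset.nonempty_iff_ne_empty.mpr hnt.1
    -- the empty set is not in F
    have hnotempty : ∀ A ∈ F, A ≠ ∅ := by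
      intro A hA hAe
      apply hnt.2
      apply Finset.eq_univ_of_forall
      intro B
      exact hinc A hA B (by rw [hAe]; exact Finset.empty_subset B)
    -- 0 belongs to the qc-defining set of F
    have h0mem : (0 : ℝ) ∈ {q : ℝ | q ∈ Set.Icc (0 : ℝ) 1 ∧
        ∃ G : Finset (Finset α), Covers G F ∧ cost q G ≤ 1 / 2} := by
      refine ⟨⟨le_refl 0, zero_le_one⟩, F, fun A hA => ⟨A, hA, subset_refl A⟩, ?_⟩
      rw [cost]
      have : ∀ A ∈ F, (0 : ℝ) ^ A.card = 0 := by
        intro A hA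
        apply zero_pow
        simpa [Finset.card_eq_zero] using hnotempty A hA
      rw [Finset.sum_eq_zero this]
      norm_num
    have hbdd : BddAbove {q : ℝ | q ∈ Set.Icc (0 : ℝ) 1 ∧
        ∃ G : Finset (Finset α), Covers G F ∧ cost q G ≤ 1 / 2} :=
      ⟨1, fun x hx => hx.1.2⟩
    have hqcF0 : 0 ≤ qc F := le_csSup hbdd h0mem
    apply Real.sSup_le
    · rintro x ⟨hxI, H', hH', hch⟩
      obtain ⟨G, hG, hGc⟩ := main_aux F k hk x hxI.1 H' hH' hch
      -- k*x ≤ 1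
      have hkx1 : (k : ℝ) * x ≤ 1 := by
        by_contra hcon
        push_neg at hcon
        obtain ⟨A, hA⟩ := hFne
        obtain ⟨T, hT, _⟩ := hG A hA
        have h1 : (1 : ℝ) ≤ ((k : ℝ) * x) ^ T.card := one_le_pow₀ hcon.le
        have h2 : ((k : ℝ) * x) ^ T.card ≤ cost ((k : ℝ) * x) G := by
          rw [cost]
          apply Finset.single_le_sum (f := fun S : Finset α => ((k : ℝ) * x) ^ S.card)
            (fun S _ => pow_nonneg (by positivity) _) hT
        linarith
      have hmem : (k : ℝ) * x ∈ {q : ℝ | q ∈ Set.Icc (0 : ℝ) 1 ∧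
          ∃ G : Finset (Finset α), Covers G F ∧ cost q G ≤ 1 / 2} :=
        ⟨⟨mul_nonneg hkR.le hxI.1, hkx1⟩, G, hG, hGc⟩
      have : (k : ℝ) * x ≤ qc F := le_csSup hbdd hmem
      rw [le_div_iff₀ hkR, mul_comm]
      exact this
    · positivity
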